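/- Let A_α = det_{1≤i,j≤n}(x_i^{α_j} - x_i^{-α_j}) for α = (α_1,...,α_n), and let p̄_r = Σ_{i=1}^n (x_i^r + x_i^{-r}). Then p̄_r · A_α = Σ_{j=1}^n A_{α + r·ε_j} + Σ_{j=1}^n A_{α - r·ε_j}, where ε_j is the j-th standard basis vector. -/
import Mathlib


open scoped BigOperators

noncomputable section

/-- The field of rational functions in `n` variables over `ℚ`; the variables
`x_i` are invertible there, so Laurent expressions make sense. -/
abbrev K (n : ℕ) := FractionRing (MvPolynomial (Fin n) ℚ)

/-- The variables `x_i`. -/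
def X {n : ℕ} (i : Fin n) : K n :=
  algebraMap (MvPolynomial (Fin n) ℚ) (K n) (MvPolynomial.X i)

/-- `A_α = det(x_i^{α_j} - x_i^{-α_j})`. -/
def A (n : ℕ) (α : Fin n → ℤ) : K n :=
  Matrix.det (Matrix.of fun i j : Fin n => X i ^ (α j) - X i ^ (-(α j)))

lemma sum_det_updateRow_eq_sum_det_updateCol {m : Type*} [Fintype m] [DecidableEq m]
    {R : Type*} [CommRing R] (M N : Matrix m m R) :
    ∑ i, (M.updateRow i (fun j => N i j)).det = ∑ j, (M.updateCol j (fun i => N i j)).det := by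
  simp only [Matrix.det_apply']
  rw [Finset.sum_comm]
  conv_rhs => rw [Finset.sum_comm]
  refine Finset.sum_congr rfl fun σ _ => ?_
  refine (Fintype.sum_equiv σ _ _ fun j => ?_).symm
  congr 1
  refine Finset.prod_congr rfl fun k _ => ?_
  rw [Matrix.updateRow_apply, Matrix.updateCol_apply]
  by_cases h : k = j
  · subst h; simp
  · rw [if_neg h, if_neg (fun hh => h (σ.injective hh))]

lemma X_ne_zero {n : ℕ} (i : Fin n) : X i ≠ 0 := by
  simp only [X, ne_eq, map_eq_zero_iff _ (IsFractionRing.injective (MvPolynomial (Fin n) ℚ) (K n))]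
  exact MvPolynomial.X_ne_zero i

lemma key_id {n : ℕ} (i : Fin n) (r a : ℤ) :
    (X i ^ r + X i ^ (-r)) * (X i ^ a - X i ^ (-a)) =
      (X i ^ (a + r) - X i ^ (-(a + r))) + (X i ^ (a - r) - X i ^ (-(a - r))) := by
  have hx := X_ne_zero i
  simp only [neg_add, neg_sub, zpow_add₀ hx, zpow_sub₀ hx, zpow_neg]
  field_simp
  ring

/-- `p̄_r A_α = Σ_j A_{α + r ε_j} + Σ_j A_{α - r ε_j}`. -/
theorem pbar_mul_A (n : ℕ) (α : Fin n → ℕ) (r : ℤ) (hr : 1 ≤ r) :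
    (∑ i : Fin n, (X i ^ r + X i ^ (-r))) * A n (fun j => (α j : ℤ)) =
      (∑ j : Fin n, A n (Function.update (fun k => (α k : ℤ)) j ((α j : ℤ) + r))) +
        ∑ j : Fin n, A n (Function.update (fun k => (α k : ℤ)) j ((α j : ℤ) - r)) := by
  set α' : Fin n → ℤ := fun j => (α j : ℤ) with hα'
  set M : Matrix (Fin n) (Fin n) (K n) :=
    Matrix.of fun i j : Fin n => X i ^ (α' j) - X i ^ (-(α' j)) with hM
  set Np : Matrix (Fin n) (Fin n) (K n) :=
    Matrix.of fun i j : Fin n => X i ^ (α' j + r) - X i ^ (-(α' j + r)) with hNp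
  set Nm : Matrix (Fin n) (Fin n) (K n) :=
    Matrix.of fun i j : Fin n => X i ^ (α' j - r) - X i ^ (-(α' j - r)) with hNm
  have step1 : (∑ i : Fin n, (X i ^ r + X i ^ (-r))) * A n α' =
      ∑ i : Fin n, ((M.updateRow i (fun j => Np i j)).det +
        (M.updateRow i (fun j => Nm i j)).det) := by
    rw [Finset.sum_mul]
    refine Finset.sum_congr rfl fun i _ => ?_
    have h1 : (X i ^ r + X i ^ (-r)) * A n α'
        = (M.updateRow i ((X i ^ r + X i ^ (-r)) • M i)).det := by
      rw [Matrix.det_updateRow_smul, Matrix.updateRow_eq_self]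
      rfl
    have h2 : (X i ^ r + X i ^ (-r)) • M i
        = (fun j => Np i j) + (fun j => Nm i j) := by
      funext j
      show (X i ^ r + X i ^ (-r)) * M i j = Np i j + Nm i j
      simp only [hM, hNp, hNm, Matrix.of_apply]
      exact key_id i r (α' j)
    rw [h1, h2, Matrix.det_updateRow_add]
  rw [step1, Finset.sum_add_distrib,
    sum_det_updateRow_eq_sum_det_updateCol M Np,
    sum_det_updateRow_eq_sum_det_updateCol M Nm]
  congr 1
  · refine Finset.sum_congr rfl fun j _ => ?_
    show _ = A n (Function.update α' j (α' j + r))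
    unfold A
    congr 1
    funext i k
    rw [Matrix.updateCol_apply]
    by_cases h : k = j
    · subst h; simp only [hNp, Matrix.of_apply, Function.update_self, if_true]
    · simp only [hM, Matrix.of_apply, Function.update_of_ne h, if_neg h]
  · refine Finset.sum_congr rfl fun j _ => ?_
    show _ = A n (Function.update α' j (α' j - r))
    unfold A
    congr 1
    funext i k
    rw [Matrix.updateCol_apply]
    by_cases h : k = j
    · subst h; simp only [hNm, Matrix.of_apply, Function.update_self, if_true]
    · simp only [hM, Matrix.of_apply, Function.update_of_ne h, if_neg h]
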